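/- Assume every instance of Positive Not-All-Equal 3-SAT in which every clause has 2 or 3 (all positive) variables: the formula Φ with clause sets of size 2 and 3 is NAE-satisfiable if and only if the graph G(Φ) has a cut of size at least m2 + 8·m3, where G(Φ) is built by taking one vertex xi per variable, one edge xi xj per 2-clause (ui, uj), and for each 3-clause (ui, uj, uk) a 9-cycle through xi, xj, xk with six new vertices so that xi, xj, xk are pairwise at distance 3 on that cycle; m2 and m3 are the numbers of 2-clauses and 3-clauses respectively. -/

import Mathlib

/-- Number of edges crossing the cut `(A, Aᶜ)`, counted via ordered pairs with
first coordinate in `A` (each crossing edge counted exactly once). -/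
noncomputable def cutSize {V : Type*} (G : SimpleGraph V) (A : Set V) : ℕ :=
  Nat.card {p : V × V // G.Adj p.1 p.2 ∧ p.1 ∈ A ∧ p.2 ∉ A}

variable {U : Type*} [DecidableEq U]

/-- Vertex type of the NAE-gadget graph: one vertex per variable, plus six new
vertices for every 3-clause. -/
abbrev NAEVert (threes : Finset (U × U × U)) : Type _ :=
  U ⊕ ({t : U × U × U // t ∈ threes} × Fin 6)

/-- The `i`-th vertex (cyclically) of the 9-cycle gadget of the 3-clause `t`:
the variable vertices `x_i, x_j, x_k` sit at positions `1, 4, 7`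
(pairwise at distance 3), the six new vertices at the remaining positions. -/
def gadgetVert {threes : Finset (U × U × U)} (t : {t : U × U × U // t ∈ threes})
    (i : Fin 9) : NAEVert threes :=
  if i = 1 then Sum.inl t.1.1
  else if i = 4 then Sum.inl t.1.2.1
  else if i = 7 then Sum.inl t.1.2.2
  else if i = 0 then Sum.inr (t, 0)
  else if i = 2 then Sum.inr (t, 1)
  else if i = 3 then Sum.inr (t, 2)
  else if i = 5 then Sum.inr (t, 3)
  else if i = 6 then Sum.inr (t, 4)
  else Sum.inr (t, 5)

/-- The graph `G(Φ)`: an edge `x_i x_j` for every 2-clause `(u_i, u_j)`, and a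
9-cycle through `x_i, x_j, x_k` (with six new vertices) for every 3-clause. -/
def naeGraph (twos : Finset (U × U)) (threes : Finset (U × U × U)) :
    SimpleGraph (NAEVert threes) :=
  SimpleGraph.fromRel (fun a b =>
    (∃ p ∈ twos, a = Sum.inl p.1 ∧ b = Sum.inl p.2) ∨
    (∃ t : {t : U × U × U // t ∈ threes}, ∃ i : Fin 9,
      a = gadgetVert t i ∧ b = gadgetVert t (i + 1)))

set_option maxRecDepth 10000

/- ------------------ auxiliary development ------------------ -/
namespace NAEAux

open Finset

instance (threes : Finset (U × U × U)) : DecidableEq (NAEVert threes × NAEVert threes) :=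
  instDecidableEqProd

lemma fin9_succ_succ_ne : ∀ j : Fin 9, j + 1 + 1 ≠ j := by decide

open Classical in
noncomputable def crossCount {V : Type*} (A : Set V) (s : Finset (V × V)) : ℕ :=
  (s.filter (fun p => p.1 ∈ A ∧ p.2 ∉ A)).card

variable {twos : Finset (U × U)} {threes : Finset (U × U × U)}

def e2 (threes : Finset (U × U × U)) (p : U × U) : Finset (NAEVert threes × NAEVert threes) :=
  {(Sum.inl p.1, Sum.inl p.2), (Sum.inl p.2, Sum.inl p.1)}

def cycE (t : {t : U × U × U // t ∈ threes}) : Finset (NAEVert threes × NAEVert threes) :=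
  (Finset.univ : Finset (Fin 9)).image (fun i => (gadgetVert t i, gadgetVert t (i + 1))) ∪
  (Finset.univ : Finset (Fin 9)).image (fun i => (gadgetVert t (i + 1), gadgetVert t i))

def allE (twos : Finset (U × U)) (threes : Finset (U × U × U)) :
    Finset (NAEVert threes × NAEVert threes) :=
  twos.biUnion (e2 threes) ∪ threes.attach.biUnion cycE

lemma gadget_ne (t : {t : U × U × U // t ∈ threes}) (i : Fin 9) :
    gadgetVert t i ≠ gadgetVert t (i + 1) := by
  fin_cases i <;> simp [gadgetVert]

lemma gadget_inj (t : {t : U × U × U // t ∈ threes})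
    (h : t.1.1 ≠ t.1.2.1 ∧ t.1.1 ≠ t.1.2.2 ∧ t.1.2.1 ≠ t.1.2.2) :
    Function.Injective (gadgetVert t) := by
  obtain ⟨h1, h2, h3⟩ := h
  apply Function.LeftInverse.injective
    (g := fun v => match v with
      | Sum.inl u => if u = t.1.1 then (1 : Fin 9) else if u = t.1.2.1 then 4 else 7
      | Sum.inr (_, k) => ![0, 2, 3, 5, 6, 8] k)
  intro i
  fin_cases i <;> simp [gadgetVert, h1, h2, h3, h1.symm, h2.symm, h3.symm] <;> decide

lemma adj_iff (h2 : ∀ p ∈ twos, p.1 ≠ p.2) {a b : NAEVert threes} :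
    (naeGraph twos threes).Adj a b ↔ (a, b) ∈ allE twos threes := by
  rw [naeGraph, SimpleGraph.fromRel_adj, allE]
  constructor
  · rintro ⟨hne, h | h⟩
    · rcases h with ⟨p, hp, ha, hb⟩ | ⟨t, i, ha, hb⟩
      · exact mem_union_left _ (mem_biUnion.2 ⟨p, hp, by simp [e2, ha, hb]⟩)
      · refine mem_union_right _ (mem_biUnion.2 ⟨t, mem_attach _ _, ?_⟩)
        exact mem_union_left _ (mem_image.2 ⟨i, mem_univ _, by rw [← ha, ← hb]⟩)
    · rcases h with ⟨p, hp, hb, ha⟩ | ⟨t, i, hb, ha⟩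
      · exact mem_union_left _ (mem_biUnion.2 ⟨p, hp, by simp [e2, ha, hb]⟩)
      · refine mem_union_right _ (mem_biUnion.2 ⟨t, mem_attach _ _, ?_⟩)
        exact mem_union_right _ (mem_image.2 ⟨i, mem_univ _, by rw [← ha, ← hb]⟩)
  · intro h
    rcases mem_union.1 h with h | h
    · rcases mem_biUnion.1 h with ⟨p, hp, hm⟩
      simp only [e2, mem_insert, mem_singleton, Prod.mk.injEq] at hm
      rcases hm with ⟨ha, hb⟩ | ⟨ha, hb⟩
      · exact ⟨by rw [ha, hb]; simp [h2 p hp], Or.inl (Or.inl ⟨p, hp, ha, hb⟩)⟩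
      · exact ⟨by rw [ha, hb]; simp [(h2 p hp).symm], Or.inr (Or.inl ⟨p, hp, hb, ha⟩)⟩
    · rcases mem_biUnion.1 h with ⟨t, _, hm⟩
      rw [cycE] at hm
      rcases mem_union.1 hm with hm | hm <;> rcases mem_image.1 hm with ⟨i, _, hi⟩ <;>
        obtain ⟨ha, hb⟩ := Prod.ext_iff.1 hi <;> subst ha <;> subst hb
      · exact ⟨gadget_ne t i, Or.inl (Or.inr ⟨t, i, rfl, rfl⟩)⟩
      · exact ⟨(gadget_ne t i).symm, Or.inr (Or.inr ⟨t, i, rfl, rfl⟩)⟩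

open Classical in
lemma cutSize_eq (h2 : ∀ p ∈ twos, p.1 ≠ p.2) (A : Set (NAEVert threes)) :
    cutSize (naeGraph twos threes) A = crossCount A (allE twos threes) := by
  have hset : {p : NAEVert threes × NAEVert threes |
      (naeGraph twos threes).Adj p.1 p.2 ∧ p.1 ∈ A ∧ p.2 ∉ A}
      = ↑((allE twos threes).filter (fun p => p.1 ∈ A ∧ p.2 ∉ A)) := by
    ext p
    simp only [Set.mem_setOf_eq, coe_filter, adj_iff h2]
    try tauto
  have : cutSize (naeGraph twos threes) A
      = Nat.card ↥{p : NAEVert threes × NAEVert threes |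
        (naeGraph twos threes).Adj p.1 p.2 ∧ p.1 ∈ A ∧ p.2 ∉ A} := rfl
  rw [this, hset, Nat.card_coe_set_eq, Set.ncard_coe_finset, crossCount]

lemma crossCount_union {V : Type*} [DecidableEq (V × V)] (A : Set V) {s t : Finset (V × V)}
    (h : Disjoint s t) :
    crossCount A (s ∪ t) = crossCount A s + crossCount A t := by
  classical
  rw [crossCount, filter_union,
    card_union_of_disjoint (h.mono (filter_subset _ _) (filter_subset _ _))]
  rfl

lemma crossCount_biUnion {V ι : Type*} [DecidableEq ι] [DecidableEq (V × V)] (A : Set V)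
    (s : Finset ι) (f : ι → Finset (V × V))
    (h : ∀ x ∈ s, ∀ y ∈ s, x ≠ y → Disjoint (f x) (f y)) :
    crossCount A (s.biUnion f) = ∑ i ∈ s, crossCount A (f i) := by
  classical
  rw [crossCount, filter_biUnion, card_biUnion]
  · rfl
  · intro x hx y hy hxy
    exact (h x hx y hy hxy).mono (filter_subset _ _) (filter_subset _ _)

lemma mem_e2_inl {p : U × U} {x : NAEVert threes × NAEVert threes} (hx : x ∈ e2 threes p) :
    (∃ u, x.1 = Sum.inl u) ∧ (∃ u, x.2 = Sum.inl u) := by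
  simp only [e2, mem_insert, mem_singleton] at hx
  rcases hx with h | h <;> subst h <;> exact ⟨⟨_, rfl⟩, ⟨_, rfl⟩⟩

lemma gadgetVert_cases (t : {t : U × U × U // t ∈ threes}) (i : Fin 9) :
    (∃ u, gadgetVert t i = Sum.inl u) ∨ (∃ k, gadgetVert t i = Sum.inr (t, k)) := by
  fin_cases i <;> simp [gadgetVert]

lemma mem_cycE_tag {t : {t : U × U × U // t ∈ threes}} {x : NAEVert threes × NAEVert threes}
    (hx : x ∈ cycE t) :
    ((∃ k, x.1 = Sum.inr (t, k)) ∨ (∃ k, x.2 = Sum.inr (t, k))) ∧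
    (∀ s k, x.1 = Sum.inr (s, k) → s = t) ∧ (∀ s k, x.2 = Sum.inr (s, k) → s = t) := by
  rw [cycE] at hx
  rcases mem_union.1 hx with h | h <;> rcases mem_image.1 h with ⟨i, _, hi⟩ <;> subst hi <;>
    fin_cases i <;> simp [gadgetVert]

lemma crossCount_allE (A : Set (NAEVert threes))
    (h2' : ∀ p ∈ twos, (p.2, p.1) ∉ twos) :
    crossCount A (allE twos threes) =
      (∑ p ∈ twos, crossCount A (e2 threes p)) +
      ∑ t ∈ threes.attach, crossCount A (cycE t) := by
  classical
  have d1 : Disjoint (twos.biUnion (e2 threes)) (threes.attach.biUnion cycE) := by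
    rw [disjoint_left]
    intro x hx hx'
    rcases mem_biUnion.1 hx with ⟨p, _, hp⟩
    rcases mem_biUnion.1 hx' with ⟨t, _, ht⟩
    obtain ⟨⟨u1, e1⟩, ⟨u2, e2⟩⟩ := mem_e2_inl hp
    rcases (mem_cycE_tag ht).1 with ⟨k, hk⟩ | ⟨k, hk⟩
    · rw [e1] at hk; exact Sum.inl_ne_inr hk
    · rw [e2] at hk; exact Sum.inl_ne_inr hk
  rw [allE, crossCount_union A d1, crossCount_biUnion, crossCount_biUnion]
  · intro x hx y hy hxy
    rw [disjoint_left]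
    intro a ha ha'
    rcases (mem_cycE_tag ha).1 with ⟨k, hk⟩ | ⟨k, hk⟩
    · exact hxy (((mem_cycE_tag ha').2.1 _ _ hk).symm ▸ rfl)
    · exact hxy (((mem_cycE_tag ha').2.2 _ _ hk).symm ▸ rfl)
  · intro p hp q hq hpq
    rw [disjoint_left]
    intro a ha ha'
    simp only [e2, mem_insert, mem_singleton] at ha ha'
    rcases ha with h | h <;> rcases ha' with h' | h' <;> rw [h] at h' <;>
      simp only [Prod.mk.injEq, Sum.inl.injEq] at h'
    · exact hpq (Prod.ext h'.1 h'.2)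
    · exact h2' q hq (by rw [← h'.1, ← h'.2]; exact hp)
    · exact h2' q hq (by rw [← h'.1, ← h'.2]; exact hp)
    · exact hpq (Prod.ext h'.2 h'.1)

open Classical in
lemma crossCount_e2 (A : Set (NAEVert threes)) (p : U × U) :
    crossCount A (e2 threes p) =
      if ((Sum.inl p.1 : NAEVert threes) ∈ A ↔ (Sum.inl p.2 : NAEVert threes) ∈ A)
      then 0 else 1 := by
  rw [crossCount, e2]
  by_cases h1 : (Sum.inl p.1 : NAEVert threes) ∈ A <;>
    by_cases hb : (Sum.inl p.2 : NAEVert threes) ∈ A <;>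
    simp [Finset.filter_insert, Finset.filter_singleton, h1, hb]

open Classical in
lemma crossCount_cycE (A : Set (NAEVert threes)) (t : {t : U × U × U // t ∈ threes})
    (hinj : Function.Injective (gadgetVert t))
    (β : Fin 9 → Bool) (hβ : ∀ i, gadgetVert t i ∈ A ↔ β i = true) :
    crossCount A (cycE t) =
      ((Finset.univ : Finset (Fin 9)).filter (fun i => β i ≠ β (i + 1))).card := by
  rw [crossCount]
  set F : Fin 9 → NAEVert threes × NAEVert threes := fun i =>
    if β i then (gadgetVert t i, gadgetVert t (i + 1))
    else (gadgetVert t (i + 1), gadgetVert t i) with hF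
  have himg : (cycE t).filter (fun p => p.1 ∈ A ∧ p.2 ∉ A)
      = ((Finset.univ : Finset (Fin 9)).filter (fun i => β i ≠ β (i + 1))).image F := by
    ext x
    rw [cycE]
    simp only [mem_filter, mem_image, mem_univ, true_and, mem_union]
    constructor
    · rintro ⟨h | h, hA1, hA2⟩ <;> rcases h with ⟨i, hi⟩ <;> subst hi
      · have hb1 : β i = true := (hβ i).1 hA1
        have hb2 : β (i + 1) = false := by
          cases h : β (i + 1)
          · rfl
          · exact absurd ((hβ (i + 1)).2 h) hA2
        exact ⟨i, by simp [hb1, hb2], by simp [hF, hb1]⟩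
      · have hb1 : β (i + 1) = true := (hβ (i + 1)).1 hA1
        have hb0 : β i = false := by
          cases h : β i
          · rfl
          · exact absurd ((hβ i).2 h) hA2
        exact ⟨i, by simp [hb0, hb1], by simp [hF, hb0]⟩
    · rintro ⟨i, hne, hFi⟩
      subst hFi
      by_cases hb : β i = true
      · have hb2 : β (i + 1) = false := by
          cases h : β (i + 1)
          · rfl
          · rw [hb, h] at hne; exact absurd rfl hne
        refine ⟨Or.inl ⟨i, by simp [hF, hb]⟩, ?_, ?_⟩
        · simpa [hF, hb] using (hβ i).2 hb
        · simp only [hF, hb, if_true]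
          intro hm
          have h' := (hβ (i + 1)).1 hm
          rw [hb2] at h'
          exact Bool.false_ne_true h'
      · have hb0 : β i = false := by
          cases h : β i
          · rfl
          · exact absurd h hb
        have hb2 : β (i + 1) = true := by
          cases h : β (i + 1)
          · rw [hb0, h] at hne; exact absurd rfl hne
          · rfl
        refine ⟨Or.inr ⟨i, by simp [hF, hb0]⟩, ?_, ?_⟩
        · simpa [hF, hb0] using (hβ (i + 1)).2 hb2
        · simp only [hF, hb0, Bool.false_eq_true, if_false]
          intro hm
          have h' := (hβ i).1 hm
          rw [hb0] at h'
          exact Bool.false_ne_true h'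
  rw [himg, Finset.card_image_of_injOn]
  intro i hi j hj hij
  simp only [mem_coe, mem_filter, mem_univ, true_and] at hi hj
  by_cases b1 : β i <;> by_cases b2 : β j <;>
    simp only [hF, b1, b2, if_true, if_false, Bool.false_eq_true, Prod.mk.injEq] at hij <;>
    obtain ⟨hij1, hij2⟩ := hij
  · exact hinj hij1
  · exfalso
    have e1 : i = j + 1 := hinj hij1
    have e2 : i + 1 = j := hinj hij2
    rw [e1] at e2
    exact fin9_succ_succ_ne j e2
  · exfalso
    have e1 : i + 1 = j := hinj hij1
    have e2 : i = j + 1 := hinj hij2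
    rw [e2] at e1
    exact fin9_succ_succ_ne j e1
  · exact hinj hij2

lemma filter_card_le8 : ∀ χ : Fin 9 → Bool,
    ((Finset.univ : Finset (Fin 9)).filter (fun i => χ i ≠ χ (i + 1))).card ≤ 8 := by decide

lemma filter_card_le6 : ∀ χ : Fin 9 → Bool, χ 1 = χ 4 → χ 4 = χ 7 →
    ((Finset.univ : Finset (Fin 9)).filter (fun i => χ i ≠ χ (i + 1))).card ≤ 6 := by decide

def ψ (a b c : Bool) : Fin 9 → Bool := ![!a, a, !a, !b, b, !b, !c, c, !c]

lemma ψ_card : ∀ a b c : Bool, ¬(a = b ∧ b = c) →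
    ((Finset.univ : Finset (Fin 9)).filter (fun i => ψ a b c i ≠ ψ a b c (i + 1))).card = 8 := by
  decide

def vb (f : U → Bool) : NAEVert threes → Bool
  | Sum.inl u => f u
  | Sum.inr (t, k) =>
      if (k : ℕ) < 2 then !(f t.1.1) else if (k : ℕ) < 4 then !(f t.1.2.1) else !(f t.1.2.2)

lemma vb_gadget (f : U → Bool) (t : {t : U × U × U // t ∈ threes}) (i : Fin 9) :
    vb f (gadgetVert t i) = ψ (f t.1.1) (f t.1.2.1) (f t.1.2.2) i := by
  fin_cases i <;> rfl

end NAEAux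

theorem posNAE3SAT_iff_maxcut
    (twos : Finset (U × U)) (threes : Finset (U × U × U))
    (h2 : ∀ p ∈ twos, p.1 ≠ p.2)
    (h2' : ∀ p ∈ twos, (p.2, p.1) ∉ twos)
    (h3 : ∀ t ∈ threes, t.1 ≠ t.2.1 ∧ t.1 ≠ t.2.2 ∧ t.2.1 ≠ t.2.2) :
    (∃ f : U → Bool,
        (∀ p ∈ twos, f p.1 ≠ f p.2) ∧
        (∀ t ∈ threes, ¬(f t.1 = f t.2.1 ∧ f t.2.1 = f t.2.2))) ↔
      (∃ A : Set (NAEVert threes),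
        twos.card + 8 * threes.card ≤ cutSize (naeGraph twos threes) A) := by
  classical
  constructor
  · rintro ⟨f, hf2, hf3⟩
    refine ⟨{v | NAEAux.vb f v = true}, ?_⟩
    set A : Set (NAEVert threes) := {v | NAEAux.vb f v = true} with hAdef
    rw [NAEAux.cutSize_eq h2 A, NAEAux.crossCount_allE A h2']
    have e2count : ∀ p ∈ twos, NAEAux.crossCount A (NAEAux.e2 threes p) = 1 := by
      intro p hp
      have hne : ¬(((Sum.inl p.1 : NAEVert threes) ∈ A) ↔ ((Sum.inl p.2 : NAEVert threes) ∈ A)) := by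
        simp only [hAdef, Set.mem_setOf_eq, NAEAux.vb]
        intro hiff
        apply hf2 p hp
        cases hx : f p.1 <;> cases hy : f p.2 <;> simp_all
      rw [NAEAux.crossCount_e2, if_neg hne]
    have e3count : ∀ t ∈ threes.attach, NAEAux.crossCount A (NAEAux.cycE t) = 8 := by
      intro t _
      rw [NAEAux.crossCount_cycE A t (NAEAux.gadget_inj t (h3 t.1 t.2))
        (NAEAux.ψ (f t.1.1) (f t.1.2.1) (f t.1.2.2))
        (fun i => by
          rw [← NAEAux.vb_gadget f t i]
          simp only [hAdef, Set.mem_setOf_eq])]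
      exact NAEAux.ψ_card _ _ _ (hf3 t.1 t.2)
    rw [Finset.sum_congr rfl e2count, Finset.sum_congr rfl e3count]
    simp [Finset.sum_const, Finset.card_attach, mul_comm]
  · rintro ⟨A, hA⟩
    have total : cutSize (naeGraph twos threes) A =
        (∑ p ∈ twos, NAEAux.crossCount A (NAEAux.e2 threes p)) +
        ∑ t ∈ threes.attach, NAEAux.crossCount A (NAEAux.cycE t) := by
      rw [NAEAux.cutSize_eq h2 A, NAEAux.crossCount_allE A h2']
    have bound2 : ∀ p ∈ twos, NAEAux.crossCount A (NAEAux.e2 threes p) ≤ 1 := by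
      intro p _
      rw [NAEAux.crossCount_e2]
      split <;> omega
    have bound3 : ∀ t ∈ threes.attach, NAEAux.crossCount A (NAEAux.cycE t) ≤ 8 := by
      intro t _
      rw [NAEAux.crossCount_cycE A t (NAEAux.gadget_inj t (h3 t.1 t.2))
        (fun i => decide (gadgetVert t i ∈ A)) (fun i => by simp)]
      exact NAEAux.filter_card_le8 _
    have hle2 : (∑ p ∈ twos, NAEAux.crossCount A (NAEAux.e2 threes p)) ≤ twos.card := by
      calc (∑ p ∈ twos, NAEAux.crossCount A (NAEAux.e2 threes p)) ≤ ∑ _p ∈ twos, 1 :=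
            Finset.sum_le_sum bound2
        _ = twos.card := by simp
    have hle3 : (∑ t ∈ threes.attach, NAEAux.crossCount A (NAEAux.cycE t)) ≤ 8 * threes.card := by
      calc (∑ t ∈ threes.attach, NAEAux.crossCount A (NAEAux.cycE t)) ≤ ∑ _t ∈ threes.attach, 8 :=
            Finset.sum_le_sum bound3
        _ = 8 * threes.card := by simp [Finset.sum_const, Finset.card_attach, mul_comm]
    refine ⟨fun u => decide ((Sum.inl u : NAEVert threes) ∈ A), ?_, ?_⟩
    · intro p hp hcon
      have hz : NAEAux.crossCount A (NAEAux.e2 threes p) = 0 := by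
        have hcon' : decide ((Sum.inl p.1 : NAEVert threes) ∈ A)
            = decide ((Sum.inl p.2 : NAEVert threes) ∈ A) := hcon
        rw [NAEAux.crossCount_e2, if_pos (decide_eq_decide.1 hcon')]
      have hlt : (∑ p ∈ twos, NAEAux.crossCount A (NAEAux.e2 threes p)) < twos.card := by
        calc (∑ p ∈ twos, NAEAux.crossCount A (NAEAux.e2 threes p)) < ∑ _p ∈ twos, 1 :=
              Finset.sum_lt_sum bound2 ⟨p, hp, by rw [hz]; omega⟩
          _ = twos.card := by simp
      omega
    · intro t ht hcon
      have h14 : (fun i => decide (gadgetVert (⟨t, ht⟩ : {t // t ∈ threes}) i ∈ A)) 1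
          = (fun i => decide (gadgetVert (⟨t, ht⟩ : {t // t ∈ threes}) i ∈ A)) 4 := by
        show decide ((Sum.inl t.1 : NAEVert threes) ∈ A) = decide ((Sum.inl t.2.1 : NAEVert threes) ∈ A)
        exact hcon.1
      have h47 : (fun i => decide (gadgetVert (⟨t, ht⟩ : {t // t ∈ threes}) i ∈ A)) 4
          = (fun i => decide (gadgetVert (⟨t, ht⟩ : {t // t ∈ threes}) i ∈ A)) 7 := by
        show decide ((Sum.inl t.2.1 : NAEVert threes) ∈ A) = decide ((Sum.inl t.2.2 : NAEVert threes) ∈ A)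
        exact hcon.2
      have hz : NAEAux.crossCount A (NAEAux.cycE (⟨t, ht⟩ : {t // t ∈ threes})) ≤ 6 := by
        rw [NAEAux.crossCount_cycE A _ (NAEAux.gadget_inj _ (h3 t ht))
          (fun i => decide (gadgetVert (⟨t, ht⟩ : {t // t ∈ threes}) i ∈ A)) (fun i => by simp)]
        exact NAEAux.filter_card_le6 _ h14 h47
      have hlt : (∑ t ∈ threes.attach, NAEAux.crossCount A (NAEAux.cycE t)) < 8 * threes.card := by
        calc (∑ t ∈ threes.attach, NAEAux.crossCount A (NAEAux.cycE t)) < ∑ _t ∈ threes.attach, 8 :=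
              Finset.sum_lt_sum bound3 ⟨⟨t, ht⟩, Finset.mem_attach _ _, by omega⟩
          _ = 8 * threes.card := by simp [Finset.sum_const, Finset.card_attach, mul_comm]
      omega
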